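/- arXiv:1609.06869 — 2 statements merged into one kernel-verified Lean document; each statement's English description precedes it below -/
import Mathlib

section
/- Let H be a complex Hilbert space, let T be a densely defined closed positive linear operator in H with m(T) > 0, let 0 < ε < m(T), and let x_ε ∈ D(T) be a unit vector with ⟨T x_ε, x_ε⟩ < m(T) + ε/2. Define the rank one operator C_ε on H by C_ε(x) = ε⟨x, x_ε⟩x_ε. Then the operator T_ε = T − C_ε (with domain D(T)) satisfies ⟨T_ε x, x⟩ ≥ (m(T) − ε)‖x‖² for all x ∈ D(T), and m(T_ε) ≤ ⟨T x_ε, x_ε⟩ − ε < m(T) − ε/2. -/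
open scoped InnerProductSpace

/-- Orthogonal projection (as an operator on `E`) onto the closure of a submodule. -/
noncomputable def projCL {E : Type*} [NormedAddCommGroup E] [InnerProductSpace ℂ E]
    [CompleteSpace E] (M : Submodule ℂ E) : E →L[ℂ] E :=
  haveI : CompleteSpace M.topologicalClosure :=
    M.isClosed_topologicalClosure.completeSpace_coe
  M.topologicalClosure.subtypeL.comp M.topologicalClosure.orthogonalProjectionOnto

/-- The graph of a partially defined operator, viewed inside the Hilbert space `E ×₂ F`. -/
noncomputable def graphL2 {E F : Type*} [NormedAddCommGroup E] [InnerProductSpace ℂ E]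
    [NormedAddCommGroup F] [InnerProductSpace ℂ F] (T : E →ₗ.[ℂ] F) :
    Submodule ℂ (WithLp 2 (E × F)) :=
  T.graph.map ((WithLp.linearEquiv 2 ℂ (E × F)).symm : (E × F) →ₗ[ℂ] WithLp 2 (E × F))

/-- The gap `θ(S,T) = ‖P_{G(S)} - P_{G(T)}‖` between two (partially defined) operators. -/
noncomputable def gap {E F : Type*} [NormedAddCommGroup E] [InnerProductSpace ℂ E]
    [NormedAddCommGroup F] [InnerProductSpace ℂ F] [CompleteSpace E] [CompleteSpace F]
    (S T : E →ₗ.[ℂ] F) : ℝ :=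
  ‖projCL (graphL2 S) - projCL (graphL2 T)‖

/-- The minimum modulus `m(T) = inf {‖Tx‖ : x ∈ D(T), ‖x‖ = 1}` of a partially
defined operator. -/
noncomputable def minModulus {E F : Type*} [NormedAddCommGroup E] [InnerProductSpace ℂ E]
    [NormedAddCommGroup F] [InnerProductSpace ℂ F] (T : E →ₗ.[ℂ] F) : ℝ :=
  sInf ((fun x : T.domain => ‖T x‖) '' {x : T.domain | ‖(x : E)‖ = 1})

/-- A partially defined operator is minimum attaining if its minimum modulus is attained
at a unit vector of its domain. -/
def MinAttaining {E F : Type*} [NormedAddCommGroup E] [InnerProductSpace ℂ E]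
    [NormedAddCommGroup F] [InnerProductSpace ℂ F] (T : E →ₗ.[ℂ] F) : Prop :=
  ∃ x₀ : T.domain, ‖(x₀ : E)‖ = 1 ∧ ‖T x₀‖ = minModulus T

/-- The sum `T + S` of a partially defined operator `T` and a bounded operator `S`,
with domain `D(T)`. -/
def addBdd {E F : Type*} [NormedAddCommGroup E] [InnerProductSpace ℂ E]
    [NormedAddCommGroup F] [InnerProductSpace ℂ F] (T : E →ₗ.[ℂ] F) (S : E →L[ℂ] F) :
    E →ₗ.[ℂ] F :=
  ⟨T.domain, T.toFun + (S : E →ₗ[ℂ] F).comp T.domain.subtype⟩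

/-- The minimum modulus `m(T) = inf {‖Tx‖ : ‖x‖ = 1}` of a bounded operator. -/
noncomputable def minModulusB {E F : Type*} [NormedAddCommGroup E] [InnerProductSpace ℂ E]
    [NormedAddCommGroup F] [InnerProductSpace ℂ F] (T : E →L[ℂ] F) : ℝ :=
  sInf ((fun x : E => ‖T x‖) '' {x : E | ‖x‖ = 1})

/-- A bounded operator is minimum attaining if its minimum modulus is attained at a
unit vector. -/
def MinAttainingB {E F : Type*} [NormedAddCommGroup E] [InnerProductSpace ℂ E]
    [NormedAddCommGroup F] [InnerProductSpace ℂ F] (T : E →L[ℂ] F) : Prop :=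
  ∃ x₀ : E, ‖x₀‖ = 1 ∧ ‖T x₀‖ = minModulusB T

namespace RankOneAux

open scoped ComplexConjugate

variable {H : Type*} [NormedAddCommGroup H] [InnerProductSpace ℂ H] [CompleteSpace H]

lemma graph_transfer {A B : H →ₗ.[ℂ] H} (h : A = B) {z w : H} (hz : z ∈ A.domain)
    (hw : A ⟨z, hz⟩ = w) : ∃ hz' : z ∈ B.domain, B ⟨z, hz'⟩ = w := by
  subst h; exact ⟨hz, hw⟩

lemma key (S : H →ₗ.[ℂ] H)
    (hgraph : IsClosed (S.graph : Set (H × H)))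
    (hsymm : ∀ x y : S.domain, ⟪S x, (y : H)⟫_ℂ = ⟪(x : H), S y⟫_ℂ)
    (hker : ∀ z : H, (∀ x : S.domain, ⟪S x, z⟫_ℂ = 0) →
      ∃ hz : z ∈ S.domain, S ⟨z, hz⟩ = 0)
    (hpos : ∀ x : S.domain, 0 ≤ (⟪S x, (x : H)⟫_ℂ).re) (x : S.domain) :
    minModulus S * ‖(x : H)‖ ^ 2 ≤ (⟪S x, (x : H)⟫_ℂ).re := by
  set m := minModulus S with hm
  have hbdd : BddBelow ((fun x : S.domain => ‖S x‖) '' {x : S.domain | ‖(x : H)‖ = 1}) := by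
    refine ⟨0, ?_⟩; rintro r ⟨y, -, rfl⟩; positivity
  have hm0 : 0 ≤ m := Real.sInf_nonneg (by rintro r ⟨y, -, rfl⟩; positivity)
  rcases eq_or_lt_of_le hm0 with h0 | hmpos
  · rw [← h0, zero_mul]; exact hpos x
  have hlow : ∀ y : S.domain, m * ‖(y : H)‖ ≤ ‖S y‖ := by
    intro y
    rcases eq_or_ne (y : H) 0 with hy | hy
    · have hy0 : y = 0 := Subtype.ext hy
      simp [hy0]
    · have hny : (0:ℝ) < ‖(y : H)‖ := norm_pos_iff.mpr hy
      set u : S.domain := ((‖(y : H)‖⁻¹ : ℝ) : ℂ) • y with hu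
      have hun : ‖(u : H)‖ = 1 := by
        simp only [hu, Submodule.coe_smul, norm_smul, Complex.norm_real, Real.norm_eq_abs,
          abs_of_pos (inv_pos.mpr hny)]
        field_simp
      have hle : m ≤ ‖S u‖ := csInf_le hbdd ⟨u, hun, rfl⟩
      have hSu : ‖S u‖ = ‖(y : H)‖⁻¹ * ‖S y‖ := by
        rw [hu, S.map_smul, norm_smul, Complex.norm_real, Real.norm_eq_abs,
          abs_of_pos (inv_pos.mpr hny)]
      rw [hSu] at hle
      have h2 := mul_le_mul_of_nonneg_right hle hny.le
      have h3 : ‖(y : H)‖⁻¹ * ‖S y‖ * ‖(y : H)‖ = ‖S y‖ := by field_simp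
      rw [h3] at h2
      exact h2
  -- the range of S
  set R : Submodule ℂ H := LinearMap.range S.toFun with hR
  have hmemR : ∀ y : H, y ∈ R ↔ ∃ w : S.domain, S w = y := by
    intro y; simp [hR, LinearMap.mem_range]
  have hRclosed : IsClosed (R : Set H) := by
    apply IsSeqClosed.isClosed
    intro f y hf hfy
    choose g hg using fun n => (hmemR (f n)).mp (hf n)
    have hgc : CauchySeq fun n => ((g n : H)) := by
      rw [Metric.cauchySeq_iff]
      intro ε hε
      obtain ⟨N, hN⟩ := Metric.cauchySeq_iff.mp hfy.cauchySeq (m * ε) (by positivity)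
      refine ⟨N, fun a ha b hb => ?_⟩
      have h1 := hlow (g a - g b)
      have h2 : S (g a - g b) = f a - f b := by rw [S.map_sub, hg, hg]
      rw [h2] at h1
      have h3 := hN a ha b hb
      rw [dist_eq_norm] at h3 ⊢
      have : ((g a - g b : S.domain) : H) = (g a : H) - (g b : H) := rfl
      rw [this] at h1
      nlinarith [norm_nonneg ((g a : H) - (g b : H))]
    obtain ⟨xl, hxl⟩ := cauchySeq_tendsto_of_complete hgc
    have hgr : ∀ n, (((g n : H)), f n) ∈ (S.graph : Set (H × H)) := by
      intro n
      rw [← hg n]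
      exact S.mem_graph (g n)
    have htend : Filter.Tendsto (fun n => (((g n : H)), f n)) Filter.atTop (nhds (xl, y)) :=
      hxl.prodMk_nhds hfy
    have hmem : (xl, y) ∈ (S.graph : Set (H × H)) :=
      hgraph.mem_of_tendsto htend (Filter.Eventually.of_forall hgr)
    simp only [SetLike.mem_coe, LinearPMap.mem_graph_iff] at hmem
    obtain ⟨w, -, hw⟩ := hmem
    exact (hmemR y).mpr ⟨w, hw⟩
  have hRtop : R = ⊤ := by
    haveI : CompleteSpace R := hRclosed.completeSpace_coe
    rw [← Submodule.orthogonal_eq_bot_iff]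
    rw [Submodule.eq_bot_iff]
    intro z hz
    have hz' : ∀ x : S.domain, ⟪S x, z⟫_ℂ = 0 := by
      intro x
      exact (Submodule.mem_orthogonal R z).mp hz _ ((hmemR (S x)).mpr ⟨x, rfl⟩)
    obtain ⟨hz1, hz2⟩ := hker z hz'
    have := hlow ⟨z, hz1⟩
    rw [hz2, norm_zero] at this
    have hnz : ‖z‖ = 0 := by nlinarith [norm_nonneg z]
    exact norm_eq_zero.mp hnz
  -- main inequality
  rcases eq_or_ne (x : H) 0 with hx | hx
  · rw [hx, norm_zero]; simpa using hpos x
  obtain ⟨w, hw⟩ : ∃ w : S.domain, S w = (x : H) := by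
    rw [← hmemR]; rw [hRtop]; trivial
  have hnx : (0:ℝ) < ‖(x : H)‖ := norm_pos_iff.mpr hx
  set A := (⟪S x, (x : H)⟫_ℂ).re with hA
  set C := (⟪S w, (w : H)⟫_ℂ).re with hC
  have hRe : ⟪S x, (w : H)⟫_ℂ = (‖(x : H)‖ ^ 2 : ℝ) := by
    rw [hsymm x w, hw, inner_self_eq_norm_sq_to_K]
    norm_cast
  have hRe' : (⟪S w, (x : H)⟫_ℂ).re = ‖(x : H)‖ ^ 2 := by
    have : ⟪S w, (x : H)⟫_ℂ = conj ⟪S x, (w : H)⟫_ℂ := by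
      rw [hsymm w x, ← inner_conj_symm, hsymm x w]
    rw [this, hRe]
    rw [Complex.conj_ofReal, Complex.ofReal_re]
  have hquad : ∀ t : ℝ, 0 ≤ A - 2 * t * ‖(x : H)‖ ^ 2 + t ^ 2 * C := by
    intro t
    have h0 := hpos (x - ((t : ℝ) : ℂ) • w)
    have hSv : S (x - ((t : ℝ) : ℂ) • w) = S x - ((t : ℝ) : ℂ) • S w := by
      rw [S.map_sub, S.map_smul]
    have hcoe : ((x - ((t : ℝ) : ℂ) • w : S.domain) : H) = (x : H) - ((t : ℝ) : ℂ) • (w : H) := rfl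
    rw [hSv, hcoe] at h0
    have hexp : (⟪S x - ((t : ℝ) : ℂ) • S w, (x : H) - ((t : ℝ) : ℂ) • (w : H)⟫_ℂ).re
        = A - 2 * t * ‖(x : H)‖ ^ 2 + t ^ 2 * C := by
      have hc : ∀ z : ℂ, (starRingEnd ℂ) (((t : ℝ) : ℂ)) * z = ((t : ℝ) : ℂ) * z := by
        intro z; rw [Complex.conj_ofReal]
      have hexpand : ⟪S x - ((t : ℝ) : ℂ) • S w, (x : H) - ((t : ℝ) : ℂ) • (w : H)⟫_ℂ
          = ⟪S x, (x : H)⟫_ℂ - ((t : ℝ) : ℂ) * ⟪S x, (w : H)⟫_ℂ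
            - ((t : ℝ) : ℂ) * ⟪S w, (x : H)⟫_ℂ
            + ((t : ℝ) : ℂ) * (((t : ℝ) : ℂ) * ⟪S w, (w : H)⟫_ℂ) := by
        simp only [inner_sub_left, inner_sub_right, inner_smul_left, inner_smul_right,
          Complex.conj_ofReal]
        ring
      rw [hexpand]
      simp only [Complex.add_re, Complex.sub_re, Complex.re_ofReal_mul, hRe', hRe,
        Complex.ofReal_re]
      ring
    rw [hexp] at h0
    exact h0
  have hC0 : 0 ≤ C := hpos w
  have hCb : m * C ≤ ‖(x : H)‖ ^ 2 := by
    have h1 : C = (⟪(x : H), (w : H)⟫_ℂ).re := by rw [hC, hw]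
    have h2 : (⟪(x : H), (w : H)⟫_ℂ).re ≤ ‖(x : H)‖ * ‖(w : H)‖ := by
      calc (⟪(x : H), (w : H)⟫_ℂ).re ≤ ‖⟪(x : H), (w : H)⟫_ℂ‖ := Complex.re_le_norm _
        _ ≤ ‖(x : H)‖ * ‖(w : H)‖ := norm_inner_le_norm _ _
    have h3 : m * ‖(w : H)‖ ≤ ‖(x : H)‖ := by rw [← hw] at hnx ⊢; exact hlow w
    nlinarith [norm_nonneg (w : H), norm_nonneg (x : H)]
  rcases eq_or_lt_of_le hC0 with hCz | hCpos
  · exfalso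
    have ht := hquad ((A + 1) / (2 * ‖(x : H)‖ ^ 2))
    rw [← hCz] at ht
    have : 2 * ((A + 1) / (2 * ‖(x : H)‖ ^ 2)) * ‖(x : H)‖ ^ 2 = A + 1 := by
      field_simp
    nlinarith [ht]
  · have ht := hquad (‖(x : H)‖ ^ 2 / C)
    have h1 : ‖(x : H)‖ ^ 4 ≤ A * C := by
      have h2 : (‖(x : H)‖ ^ 2 / C) ^ 2 * C = ‖(x : H)‖ ^ 4 / C := by
        field_simp
      rw [h2] at ht
      have := mul_le_mul_of_nonneg_right (by linarith [ht] :
        2 * (‖(x : H)‖ ^ 2 / C) * ‖(x : H)‖ ^ 2 - ‖(x : H)‖ ^ 4 / C ≤ A) (le_of_lt hCpos)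
      field_simp at this ⊢
      nlinarith [this]
    nlinarith [mul_le_mul_of_nonneg_left hCb (sq_nonneg ‖(x : H)‖), hCpos, sq_nonneg ‖(x : H)‖]

end RankOneAux

/-- Key estimates in the construction: for a densely defined closed positive operator `T`
with `m(T) > 0`, `0 < ε < m(T)`, a unit vector `xε ∈ D(T)` with `⟨T xε, xε⟩ < m(T) + ε/2`,
and the rank one operator `Cε x = ε ⟪xε, x⟫ xε`, the operator `Tε = T - Cε` satisfies
`⟨Tε x, x⟩ ≥ (m(T) - ε) ‖x‖²` on `D(T)` and `m(Tε) ≤ ⟨T xε, xε⟩ - ε < m(T) - ε/2`. -/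
theorem rankOne_perturbation_estimates {H : Type*}
    [NormedAddCommGroup H] [InnerProductSpace ℂ H] [CompleteSpace H]
    (T : H →ₗ.[ℂ] H)
    (hdense : Dense (T.domain : Set H)) (hclosed : T.IsClosed)
    (hsa : IsSelfAdjoint T)
    (hpos : ∀ x : T.domain, 0 ≤ (inner ℂ (T x) (x : H) : ℂ).re)
    (hm : 0 < minModulus T) (ε : ℝ) (hε : 0 < ε) (hεm : ε < minModulus T)
    (xε : T.domain) (hxε : ‖(xε : H)‖ = 1)
    (hxεm : (inner ℂ (T xε) ((xε : H)) : ℂ).re < minModulus T + ε / 2)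
    (Cε : H →L[ℂ] H)
    (hCε : Cε = (ε : ℂ) • (innerSL ℂ ((xε : H))).smulRight ((xε : H))) :
    (∀ x : (addBdd T (-Cε)).domain,
        (minModulus T - ε) * ‖(x : H)‖ ^ 2 ≤ (inner ℂ ((addBdd T (-Cε)) x) (x : H) : ℂ).re) ∧
      minModulus (addBdd T (-Cε)) ≤ (inner ℂ (T xε) ((xε : H)) : ℂ).re - ε ∧
      (inner ℂ (T xε) ((xε : H)) : ℂ).re - ε < minModulus T - ε / 2 := by
  classical
  rw [LinearPMap.isSelfAdjoint_def] at hsa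
  -- symmetry of T
  have hTsymm : ∀ x y : T.domain, ⟪T x, (y : H)⟫_ℂ = ⟪(x : H), T y⟫_ℂ := by
    have h := LinearPMap.adjoint_isFormalAdjoint hdense (T := T)
    rw [hsa] at h
    exact h
  -- adjoint-domain transfer
  have hTker : ∀ z w : H, (∀ x : T.domain, ⟪T x, z⟫_ℂ = ⟪(x : H), w⟫_ℂ) →
      ∃ hz : z ∈ T.domain, T ⟨z, hz⟩ = w := by
    intro z w h
    have hx₀ : ∀ x : T.domain, ⟪w, (x : H)⟫_ℂ = ⟪z, T x⟫_ℂ := by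
      intro x
      rw [← inner_conj_symm z (T x), h x, inner_conj_symm]
    have hmem : z ∈ (LinearPMap.adjoint T).domain :=
      LinearPMap.mem_adjoint_domain_of_exists z ⟨w, hx₀⟩
    have happ : (LinearPMap.adjoint T) ⟨z, hmem⟩ = w :=
      LinearPMap.adjoint_apply_eq hdense ⟨z, hmem⟩ (hx₀ ·)
    exact RankOneAux.graph_transfer hsa hmem happ
  -- basic facts about Cε
  have hCapp : ∀ u : H, Cε u = ((ε : ℂ) * ⟪(xε : H), u⟫_ℂ) • (xε : H) := by
    intro u
    rw [hCε]
    simp only [ContinuousLinearMap.smul_apply, ContinuousLinearMap.smulRight_apply,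
      innerSL_apply_apply, mul_smul]
  have hCsymm : ∀ u v : H, ⟪Cε u, v⟫_ℂ = ⟪u, Cε v⟫_ℂ := by
    intro u v
    rw [hCapp, hCapp, inner_smul_left, inner_smul_right]
    rw [← inner_conj_symm u ((xε : H))]
    simp only [map_mul, Complex.conj_ofReal]
    ring
  have hCinner : ∀ u : H, (⟪Cε u, u⟫_ℂ).re = ε * Complex.normSq ⟪(xε : H), u⟫_ℂ := by
    intro u
    rw [hCapp, inner_smul_left]
    rw [map_mul, Complex.conj_ofReal, mul_assoc, ← Complex.normSq_eq_conj_mul_self]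
    simp
  set Tε := addBdd T (-Cε) with hTε
  have hTεapp : ∀ x : Tε.domain, Tε x = T ⟨(x : H), x.2⟩ - Cε (x : H) := by
    intro x
    show T.toFun x + (-Cε) (x : H) = _
    rw [ContinuousLinearMap.neg_apply, ← sub_eq_add_neg]
    rfl
  -- Lemma key applied to T
  have hTmain : ∀ x : T.domain, minModulus T * ‖(x : H)‖ ^ 2 ≤ (⟪T x, (x : H)⟫_ℂ).re := by
    refine RankOneAux.key T hclosed hTsymm ?_ hpos
    intro z hz
    refine hTker z 0 ?_
    intro x
    rw [hz x]
    simp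
  -- Part 1
  have part1 : ∀ x : Tε.domain,
      (minModulus T - ε) * ‖(x : H)‖ ^ 2 ≤ (⟪Tε x, (x : H)⟫_ℂ).re := by
    intro x
    have h1 := hTmain ⟨(x : H), x.2⟩
    have h2 : (⟪Tε x, (x : H)⟫_ℂ).re
        = (⟪T ⟨(x : H), x.2⟩, (x : H)⟫_ℂ).re - ε * Complex.normSq ⟪(xε : H), (x : H)⟫_ℂ := by
      rw [hTεapp x, inner_sub_left, Complex.sub_re, hCinner]
    have h3 : Complex.normSq ⟪(xε : H), (x : H)⟫_ℂ ≤ ‖(x : H)‖ ^ 2 := by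
      have h4 : ‖⟪(xε : H), (x : H)⟫_ℂ‖ ≤ ‖(xε : H)‖ * ‖(x : H)‖ := norm_inner_le_norm _ _
      rw [hxε, one_mul] at h4
      have h5 : Complex.normSq ⟪(xε : H), (x : H)⟫_ℂ = ‖⟪(xε : H), (x : H)⟫_ℂ‖ ^ 2 := by
        rw [Complex.normSq_eq_norm_sq]
      rw [h5]
      have := norm_nonneg ⟪(xε : H), (x : H)⟫_ℂ
      nlinarith
    rw [h2]
    nlinarith [sq_nonneg ‖(x : H)‖]
  refine ⟨part1, ?_, by linarith⟩
  -- closedness of Tε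
  have hclosedε : IsClosed (Tε.graph : Set (H × H)) := by
    have hset : (Tε.graph : Set (H × H))
        = (fun p : H × H => (p.1, p.2 + Cε p.1)) ⁻¹' (T.graph : Set (H × H)) := by
      ext ⟨u, v⟩
      simp only [Set.mem_preimage, SetLike.mem_coe, LinearPMap.mem_graph_iff]
      constructor
      · rintro ⟨y, hy, hv⟩
        subst hy
        subst hv
        refine ⟨⟨(y : H), y.2⟩, rfl, ?_⟩
        rw [hTεapp y]
        abel
      · rintro ⟨y, hy, hv⟩
        subst hy
        refine ⟨⟨(y : H), y.2⟩, rfl, ?_⟩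
        rw [hTεapp]
        show T y - Cε (y : H) = v
        rw [hv]
        abel
    rw [hset]
    exact hclosed.preimage (by fun_prop)
  -- kernel-type property for Tε
  have hkerε : ∀ z : H, (∀ x : Tε.domain, ⟪Tε x, z⟫_ℂ = 0) →
      ∃ hz : z ∈ Tε.domain, Tε ⟨z, hz⟩ = 0 := by
    intro z hz
    have h1 : ∀ x : T.domain, ⟪T x, z⟫_ℂ = ⟪(x : H), Cε z⟫_ℂ := by
      intro x
      have h2 := hz ⟨(x : H), x.2⟩
      rw [hTεapp, inner_sub_left, sub_eq_zero] at h2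
      have h3 : T ⟨((⟨(x : H), x.2⟩ : Tε.domain) : H), x.2⟩ = T x := by congr 1
      rw [h3] at h2
      rw [h2, hCsymm]
    obtain ⟨hzd, hTz⟩ := hTker z (Cε z) h1
    refine ⟨hzd, ?_⟩
    rw [hTεapp]
    have h4 : T ⟨((⟨z, hzd⟩ : Tε.domain) : H), hzd⟩ = Cε z := hTz
    rw [h4]
    simp
  -- symmetry of Tε
  have hsymmε : ∀ x y : Tε.domain, ⟪Tε x, (y : H)⟫_ℂ = ⟪(x : H), Tε y⟫_ℂ := by
    intro x y
    rw [hTεapp x, hTεapp y, inner_sub_left, inner_sub_right,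
      hTsymm ⟨(x : H), x.2⟩ ⟨(y : H), y.2⟩, hCsymm]
  -- positivity of Tε
  have hposε : ∀ x : Tε.domain, 0 ≤ (⟪Tε x, (x : H)⟫_ℂ).re := by
    intro x
    refine le_trans ?_ (part1 x)
    have : 0 ≤ minModulus T - ε := by linarith
    positivity
  -- key applied to Tε at xε
  have hεmain := RankOneAux.key Tε hclosedε hsymmε hkerε hposε ⟨(xε : H), xε.2⟩
  have hval : (⟪Tε ⟨(xε : H), xε.2⟩, (xε : H)⟫_ℂ).re = (⟪T xε, (xε : H)⟫_ℂ).re - ε := by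
    rw [hTεapp, inner_sub_left, Complex.sub_re, hCinner]
    have h5 : T ⟨((⟨(xε : H), xε.2⟩ : Tε.domain) : H), xε.2⟩ = T xε := by congr 1
    rw [h5]
    have h6 : ⟪(xε : H), (xε : H)⟫_ℂ = ((1 : ℝ) : ℂ) := by
      rw [inner_self_eq_norm_sq_to_K, hxε]
      norm_num
    rw [h6]
    simp
  rw [hval] at hεmain
  have h7 : ‖((⟨(xε : H), xε.2⟩ : Tε.domain) : H)‖ = 1 := hxε
  rw [h7] at hεmain
  simpa using hεmain
end

section
/- Let H be a complex Hilbert space and let T be a densely defined closed positive linear operator in H. Then m(T) = inf{⟨Tx, x⟩ : x ∈ D(T), ‖x‖ = 1}, i.e. the minimum modulus of T equals the infimum of the quadratic form of T over unit vectors of the domain. -/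
open scoped InnerProductSpace

section AuxLemmas


variable {H : Type*} [NormedAddCommGroup H] [InnerProductSpace ℂ H] [CompleteSpace H]

/-- Symmetry of a self-adjoint partially defined operator. -/
lemma auxT_symm (T : H →ₗ.[ℂ] H) (hdense : Dense (T.domain : Set H))
    (hsa : IsSelfAdjoint T) (x y : T.domain) :
    (inner ℂ (T x) (y : H) : ℂ) = inner ℂ (x : H) (T y) := by
  rw [LinearPMap.isSelfAdjoint_def] at hsa
  obtain ⟨hdom, hval⟩ := LinearPMap.ext_iff.mp hsa
  have hx' : (x : H) ∈ T.adjoint.domain := by rw [hdom]; exact x.2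
  have h1 := LinearPMap.adjoint_isFormalAdjoint hdense ⟨(x : H), hx'⟩ y
  have h2 : T.adjoint ⟨(x : H), hx'⟩ = T x := hval (x := (x : H)) (hf := hx') (hg := x.2)
  rw [h2] at h1
  exact h1

/-- If `⟪T x, y⟫ = ⟪x, β y⟫` for all `x` in the domain, then `y` is in the domain of a
self-adjoint operator `T` and is an eigenvector for `β`. -/
lemma auxT_eigen (T : H →ₗ.[ℂ] H) (hdense : Dense (T.domain : Set H))
    (hsa : IsSelfAdjoint T) (y : H) (β : ℝ)
    (h : ∀ x : T.domain, (inner ℂ (T x) y : ℂ) = inner ℂ (x : H) ((β : ℂ) • y)) :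
    ∃ hy : y ∈ T.domain, T ⟨y, hy⟩ = (β : ℂ) • y := by
  have key : ∀ x : T.domain, (inner ℂ ((β : ℂ) • y) (x : H) : ℂ) = inner ℂ y (T x) := by
    intro x
    rw [← inner_conj_symm, ← h x, inner_conj_symm]
  have hmem : y ∈ T.adjoint.domain :=
    LinearPMap.mem_adjoint_domain_of_exists y ⟨(β : ℂ) • y, key⟩
  have happ : T.adjoint ⟨y, hmem⟩ = (β : ℂ) • y :=
    LinearPMap.adjoint_apply_eq hdense ⟨y, hmem⟩ key
  rw [LinearPMap.isSelfAdjoint_def] at hsa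
  obtain ⟨hdom, hval⟩ := LinearPMap.ext_iff.mp hsa
  have hy : y ∈ T.domain := by rw [← hdom]; exact hmem
  exact ⟨hy, by rw [← hval (x := y) (hf := hmem) (hg := hy)]; exact happ⟩

/-- Scaling lemma: a bound on unit vectors for a suitably homogeneous function extends to
all vectors. -/
lemma auxT_scale (T : H →ₗ.[ℂ] H) (φ : T.domain → ℝ) (k : ℕ) (hk : k ≠ 0)
    (hφ : ∀ (t : ℝ), 0 ≤ t → ∀ x : T.domain, φ (((t : ℝ) : ℂ) • x) = t ^ k * φ x)
    (κ : ℝ) (h : ∀ x : T.domain, ‖(x : H)‖ = 1 → κ ≤ φ x) :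
    ∀ x : T.domain, κ * ‖(x : H)‖ ^ k ≤ φ x := by
  intro x
  rcases eq_or_ne ((x : H)) 0 with h0 | h0
  · have hx0 : x = 0 := Subtype.ext h0
    have : φ 0 = 0 := by
      have := hφ 0 le_rfl 0
      simpa [zero_pow hk] using this
    rw [hx0, this]
    simp [zero_pow hk]
  · set r : ℝ := ‖(x : H)‖ with hr
    have hrpos : 0 < r := norm_pos_iff.mpr h0
    set xu : T.domain := ((r⁻¹ : ℝ) : ℂ) • x with hxu
    have hxu1 : ‖(xu : H)‖ = 1 := by
      have hco : ((xu : T.domain) : H) = ((r⁻¹ : ℝ) : ℂ) • (x : H) := rfl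
      rw [hco, norm_smul]
      simp only [Complex.norm_real, Real.norm_eq_abs, abs_of_nonneg (inv_nonneg.mpr hrpos.le)]
      rw [← hr, inv_mul_cancel₀ hrpos.ne']
    have h1 : κ ≤ φ xu := h xu hxu1
    rw [hφ r⁻¹ (inv_nonneg.mpr hrpos.le) x] at h1
    have h2 : κ * r ^ k ≤ (r⁻¹ ^ k * φ x) * r ^ k :=
      mul_le_mul_of_nonneg_right h1 (pow_nonneg hrpos.le k)
    calc κ * r ^ k ≤ (r⁻¹ ^ k * φ x) * r ^ k := h2
      _ = φ x := by
          rw [mul_comm (r⁻¹ ^ k) (φ x), mul_assoc, ← mul_pow, inv_mul_cancel₀ hrpos.ne']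
          simp

/-- Surjectivity of `T - β` when it is bounded below, for closed self-adjoint `T`. -/
lemma auxT_surj (T : H →ₗ.[ℂ] H) (hdense : Dense (T.domain : Set H))
    (hclosed : T.IsClosed) (hsa : IsSelfAdjoint T) (β c : ℝ) (hc : 0 < c)
    (hbound : ∀ x : T.domain, c * ‖(x : H)‖ ≤ ‖T x - (β : ℂ) • (x : H)‖) :
    ∀ y : H, ∃ w : T.domain, T w - (β : ℂ) • (w : H) = y := by
  set Slin : T.domain →ₗ[ℂ] H := T.toFun - (β : ℂ) • T.domain.subtype with hSdef
  have hS : ∀ x : T.domain, Slin x = T x - (β : ℂ) • (x : H) := fun _ => rfl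
  have hbound' : ∀ x : T.domain, c * ‖(x : H)‖ ≤ ‖Slin x‖ := fun x => by
    rw [hS]; exact hbound x
  set M : Submodule ℂ H := LinearMap.range Slin with hM
  have hMc : IsClosed (M : Set H) := by
    apply IsSeqClosed.isClosed
    intro g y hgM hg
    choose w hw using fun n => LinearMap.mem_range.mp (hgM n)
    have hwc : CauchySeq (fun n => ((w n : H))) := by
      rw [Metric.cauchySeq_iff]
      intro ε hε
      obtain ⟨N, hN⟩ := Metric.cauchySeq_iff.mp hg.cauchySeq (c * ε) (by positivity)
      refine ⟨N, fun m hm n hn => ?_⟩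
      have h1 : c * ‖((w m - w n : T.domain) : H)‖ ≤ ‖Slin (w m - w n)‖ := hbound' _
      rw [map_sub, hw, hw] at h1
      have h2 : dist (g m) (g n) < c * ε := hN m hm n hn
      rw [dist_eq_norm] at h2
      rw [dist_eq_norm]
      have hco : ((w m - w n : T.domain) : H) = (w m : H) - (w n : H) := rfl
      rw [hco] at h1
      have := lt_of_le_of_lt h1 h2
      exact (mul_lt_mul_iff_right₀ hc).mp this
    obtain ⟨x, hx⟩ := cauchySeq_tendsto_of_complete hwc
    have hTw : ∀ n, T (w n) = g n + (β : ℂ) • ((w n : H)) := by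
      intro n
      have h1 := hw n
      rw [hS] at h1
      rw [← h1]; abel
    have hTt : Filter.Tendsto (fun n => T (w n)) Filter.atTop (nhds (y + (β : ℂ) • x)) := by
      have h1 : Filter.Tendsto (fun n => g n + (β : ℂ) • ((w n : H))) Filter.atTop
          (nhds (y + (β : ℂ) • x)) := hg.add (hx.const_smul _)
      simpa only [hTw] using h1
    have hgr : (x, y + (β : ℂ) • x) ∈ T.graph := by
      have hmem : ∀ n, (((w n : H)), T (w n)) ∈ (T.graph : Set (H × H)) :=
        fun n => T.mem_graph _
      exact hclosed.mem_of_tendsto (hx.prodMk_nhds hTt) (Filter.Eventually.of_forall hmem)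
    rcases T.mem_graph_iff.mp hgr with ⟨z, hz1, hz2⟩
    apply LinearMap.mem_range.mpr
    refine ⟨z, ?_⟩
    rw [hS, hz2, hz1]
    exact add_sub_cancel_right _ _
  have hOrth : Mᗮ = ⊥ := by
    rw [Submodule.eq_bot_iff]
    intro y hy
    have h0 : ∀ x : T.domain, (inner ℂ (T x) y : ℂ) = inner ℂ (x : H) ((β : ℂ) • y) := by
      intro x
      have h1 := (Submodule.mem_orthogonal M y).mp hy (Slin x) (LinearMap.mem_range_self _ x)
      rw [hS, inner_sub_left, sub_eq_zero] at h1
      rw [h1, inner_smul_left, inner_smul_right, Complex.conj_ofReal]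
    obtain ⟨hyD, hTy⟩ := auxT_eigen T hdense hsa y β h0
    have h2 := hbound ⟨y, hyD⟩
    rw [hTy] at h2
    simp only [sub_self, norm_zero] at h2
    have : ‖y‖ ≤ 0 := nonpos_of_mul_nonpos_right ?_ hc
    · exact norm_le_zero_iff.mp this
    · simpa [mul_comm] using h2
  haveI : CompleteSpace M := hMc.completeSpace_coe
  have hMtop : M = ⊤ := Submodule.orthogonal_eq_bot_iff.mp hOrth
  intro y
  have : y ∈ M := by rw [hMtop]; trivial
  obtain ⟨w, hw⟩ := LinearMap.mem_range.mp this
  exact ⟨w, by rw [← hS]; exact hw⟩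

end AuxLemmas

/-- For a densely defined closed positive operator `T`, the minimum modulus equals the
infimum of the quadratic form `⟨Tx, x⟩` over unit vectors of the domain. -/
theorem minModulus_eq_sInf_quadraticForm {H : Type*}
    [NormedAddCommGroup H] [InnerProductSpace ℂ H] [CompleteSpace H] [Nontrivial H]
    (T : H →ₗ.[ℂ] H)
    (hdense : Dense (T.domain : Set H)) (hclosed : T.IsClosed)
    (hsa : IsSelfAdjoint T)
    (hpos : ∀ x : T.domain, 0 ≤ (inner ℂ (T x) (x : H) : ℂ).re) :
    minModulus T =
      sInf ((fun x : T.domain => (inner ℂ (T x) (x : H) : ℂ).re) ''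
        {x : T.domain | ‖(x : H)‖ = 1}) := by
  classical
  obtain ⟨u, hu⟩ : ∃ u : T.domain, ‖(u : H)‖ = 1 := by
    obtain ⟨d, hd, hd0⟩ : ∃ d : H, d ∈ T.domain ∧ d ≠ 0 := by
      by_contra hcon
      push_neg at hcon
      obtain ⟨v, hv⟩ := exists_ne (0 : H)
      have hsub : (T.domain : Set H) ⊆ {0} := fun z hz => hcon z hz
      have h1 : v ∈ closure (T.domain : Set H) := hdense.closure_eq ▸ Set.mem_univ v
      have h2 : v ∈ ({0} : Set H) := closure_minimal hsub isClosed_singleton h1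
      exact hv h2
    refine ⟨((‖d‖⁻¹ : ℝ) : ℂ) • ⟨d, hd⟩, ?_⟩
    have hco : ((((‖d‖⁻¹ : ℝ) : ℂ) • (⟨d, hd⟩ : T.domain) : T.domain) : H)
        = ((‖d‖⁻¹ : ℝ) : ℂ) • d := rfl
    rw [hco, norm_smul]
    simp only [Complex.norm_real, Real.norm_eq_abs, abs_of_nonneg
      (inv_nonneg.mpr (norm_nonneg d))]
    exact inv_mul_cancel₀ (norm_ne_zero_iff.mpr hd0)
  unfold minModulus
  set SB := ((fun x : T.domain => (inner ℂ (T x) (x : H) : ℂ).re) ''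
    {x : T.domain | ‖(x : H)‖ = 1}) with hSBdef
  set SA := ((fun x : T.domain => ‖T x‖) '' {x : T.domain | ‖(x : H)‖ = 1}) with hSAdef
  have hSBne : SB.Nonempty := ⟨_, ⟨u, hu, rfl⟩⟩
  have hSAne : SA.Nonempty := ⟨_, ⟨u, hu, rfl⟩⟩
  have hSBbd : BddBelow SB := ⟨0, by rintro b ⟨x, -, rfl⟩; exact hpos x⟩
  have hSAbd : BddBelow SA := ⟨0, by rintro b ⟨x, -, rfl⟩; exact norm_nonneg _⟩
  set β := sInf SB with hβdef
  set m := sInf SA with hmdef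
  have hβ0 : 0 ≤ β := le_csInf hSBne (by rintro b ⟨x, -, rfl⟩; exact hpos x)
  have hβle : ∀ x : T.domain, ‖(x : H)‖ = 1 → β ≤ (inner ℂ (T x) (x : H) : ℂ).re :=
    fun x hx => csInf_le hSBbd ⟨x, hx, rfl⟩
  have hmle : ∀ x : T.domain, ‖(x : H)‖ = 1 → m ≤ ‖T x‖ :=
    fun x hx => csInf_le hSAbd ⟨x, hx, rfl⟩
  -- the quadratic form scaled bound
  have hq : ∀ x : T.domain, β * ‖(x : H)‖ ^ 2 ≤ (inner ℂ (T x) (x : H) : ℂ).re := by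
    apply auxT_scale T _ 2 two_ne_zero _ β hβle
    intro t ht x
    have hT : T (((t : ℝ) : ℂ) • x) = ((t : ℝ) : ℂ) • T x := T.map_smul _ x
    have hco : ((((t : ℝ) : ℂ) • x : T.domain) : H) = ((t : ℝ) : ℂ) • (x : H) := rfl
    rw [hT, hco, inner_smul_left, inner_smul_right, Complex.conj_ofReal, ← mul_assoc,
      ← Complex.ofReal_mul, Complex.re_ofReal_mul]
    ring
  -- easy direction : β ≤ m
  have heasy : β ≤ m := by
    apply le_csInf hSAne
    rintro b ⟨x, hx1, rfl⟩
    calc β ≤ (inner ℂ (T x) (x : H) : ℂ).re := hβle x hx1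
      _ ≤ ‖(inner ℂ (T x) (x : H) : ℂ)‖ := Complex.re_le_norm _
      _ ≤ ‖T x‖ * ‖(x : H)‖ := norm_inner_le_norm _ _
      _ = ‖T x‖ := by rw [hx1, mul_one]
  -- hard direction : m ≤ β
  have hhard : m ≤ β := by
    by_contra hlt
    push_neg at hlt
    set c : ℝ := m - β with hcdef
    have hc : 0 < c := sub_pos.mpr hlt
    -- the operator S = T - β
    set Slin : T.domain →ₗ[ℂ] H := T.toFun - (β : ℂ) • T.domain.subtype with hSdef
    have hS : ∀ x : T.domain, Slin x = T x - (β : ℂ) • (x : H) := fun _ => rfl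
    have hShom : ∀ (t : ℝ), 0 ≤ t → ∀ x : T.domain,
        ‖Slin (((t : ℝ) : ℂ) • x)‖ = t ^ 1 * ‖Slin x‖ := by
      intro t ht x
      rw [map_smul, norm_smul]
      simp [abs_of_nonneg ht]
    have hSunit : ∀ x : T.domain, ‖(x : H)‖ = 1 → c ≤ ‖Slin x‖ := by
      intro x hx1
      have h1 : ‖T x‖ - ‖(β : ℂ) • (x : H)‖ ≤ ‖T x - (β : ℂ) • (x : H)‖ :=
        norm_sub_norm_le _ _
      have h2 : ‖(β : ℂ) • (x : H)‖ = β := by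
        rw [norm_smul, hx1, mul_one, Complex.norm_real, Real.norm_eq_abs, abs_of_nonneg hβ0]
      rw [hS]
      calc c = m - β := rfl
        _ ≤ ‖T x‖ - β := by linarith [hmle x hx1]
        _ = ‖T x‖ - ‖(β : ℂ) • (x : H)‖ := by rw [h2]
        _ ≤ ‖T x - (β : ℂ) • (x : H)‖ := h1
    have hbound : ∀ x : T.domain, c * ‖(x : H)‖ ≤ ‖T x - (β : ℂ) • (x : H)‖ := by
      intro x
      have := auxT_scale T (fun x => ‖Slin x‖) 1 one_ne_zero hShom c hSunit x
      rw [hS] at this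
      simpa using this
    have hsurj := auxT_surj T hdense hclosed hsa β c hc hbound
    -- symmetry and positivity of the form of S
    have hsym := auxT_symm T hdense hsa
    have hSsym : ∀ x y : T.domain, (inner ℂ (Slin x) (y : H) : ℂ) = inner ℂ (x : H) (Slin y) := by
      intro x y
      rw [hS, hS, inner_sub_left, inner_sub_right, hsym x y, inner_smul_left,
        inner_smul_right, Complex.conj_ofReal]
    have hres : ∀ z : H, (inner ℂ z z : ℂ).re = ‖z‖ ^ 2 := fun z => by
      rw [← RCLike.re_to_complex]
      exact inner_self_eq_norm_sq (𝕜 := ℂ) z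
    have hSpos : ∀ x : T.domain, 0 ≤ (inner ℂ (Slin x) (x : H) : ℂ).re := by
      intro x
      rw [hS, inner_sub_left, inner_smul_left, Complex.conj_ofReal, Complex.sub_re,
        Complex.re_ofReal_mul, hres]
      linarith [hq x]
    -- Cauchy-Schwarz for the positive form of S
    let core : PreInnerProductSpace.Core ℂ T.domain :=
      { inner := fun a b => (inner ℂ (Slin a) ((b : T.domain) : H) : ℂ)
        conj_inner_symm := fun a b => by
          rw [hSsym b a, inner_conj_symm]
        re_inner_nonneg := hSpos
        add_left := fun a b z => by simp only [map_add, inner_add_left]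
        smul_left := fun a b r => by simp only [map_smul, inner_smul_left] }
    have hge : ∀ b ∈ SB, m ≤ b := by
      rintro b ⟨x, hx1, rfl⟩
      simp only [Set.mem_setOf_eq] at hx1
      obtain ⟨w, hwx⟩ := hsurj (x : H)
      have hSw : Slin w = (x : H) := by rw [hS]; exact hwx
      have hCS : ‖(inner ℂ (Slin x) ((w : T.domain) : H) : ℂ)‖ *
            ‖(inner ℂ (Slin w) ((x : T.domain) : H) : ℂ)‖ ≤
          RCLike.re (inner ℂ (Slin x) ((x : T.domain) : H) : ℂ) *
            RCLike.re (inner ℂ (Slin w) ((w : T.domain) : H) : ℂ) :=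
        InnerProductSpace.Core.inner_mul_inner_self_le (𝕜 := ℂ) (F := T.domain) (c := core) x w
      have hxx : (inner ℂ (x : H) (x : H) : ℂ) = 1 := by
        rw [inner_self_eq_norm_sq_to_K (𝕜 := ℂ) (x : H), hx1]
        norm_num
      have h1 : (inner ℂ (Slin x) ((w : T.domain) : H) : ℂ) = 1 := by
        rw [hSsym x w, hSw, hxx]
      have h2 : (inner ℂ (Slin w) ((x : T.domain) : H) : ℂ) = 1 := by
        rw [hSw, hxx]
      rw [h1, h2, norm_one, one_mul] at hCS
      -- bound on the w-term
      have hwnorm : ‖(w : H)‖ ≤ c⁻¹ := by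
        have h3 := hbound w
        rw [hwx, hx1] at h3
        rw [← le_div_iff₀' hc] at h3
        simpa [one_div] using h3
      have h4 : RCLike.re (inner ℂ (Slin w) ((w : T.domain) : H) : ℂ) ≤ c⁻¹ := by
        calc RCLike.re (inner ℂ (Slin w) ((w : T.domain) : H) : ℂ)
            ≤ ‖(inner ℂ (Slin w) ((w : T.domain) : H) : ℂ)‖ := RCLike.re_le_norm _
          _ ≤ ‖Slin w‖ * ‖(w : H)‖ := norm_inner_le_norm _ _
          _ = ‖(w : H)‖ := by rw [hSw, hx1, one_mul]
          _ ≤ c⁻¹ := hwnorm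
      have h5 : 0 ≤ RCLike.re (inner ℂ (Slin x) ((x : T.domain) : H) : ℂ) := hSpos x
      have h6 : 1 ≤ RCLike.re (inner ℂ (Slin x) ((x : T.domain) : H) : ℂ) * c⁻¹ :=
        le_trans hCS (mul_le_mul_of_nonneg_left h4 h5)
      have h7 : c ≤ RCLike.re (inner ℂ (Slin x) ((x : T.domain) : H) : ℂ) := by
        have hcc : c * c⁻¹ = 1 := mul_inv_cancel₀ hc.ne'
        nlinarith [h6, hc]
      have h8 : RCLike.re (inner ℂ (Slin x) ((x : T.domain) : H) : ℂ)
          = (inner ℂ (T x) (x : H) : ℂ).re - β := by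
        rw [RCLike.re_to_complex, hS, inner_sub_left, inner_smul_left, Complex.conj_ofReal,
          Complex.sub_re, Complex.re_ofReal_mul, hres, hx1]
        norm_num
      rw [h8] at h7
      rw [hcdef] at h7
      linarith
    have : m ≤ β := le_csInf hSBne hge
    linarith
  exact le_antisymm hhard heasy
end
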